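/- Let E be an isotropic subspace of V × V*, and set U = pr_V E and U′ = pr_V E^⊥. Then dim E = dim U + (dim V − dim U′) and dim E^⊥ = dim U′ + (dim V − dim U); equivalently, dim E = dim U + dim ann U′ and dim E^⊥ = dim U′ + dim ann U, where for a subspace W ⊆ V, ann W = {α ∈ V* : α(v) = 0 for all v ∈ W}. -/

import Mathlib

open Module LinearMap

/-- The pairing metric `g((X,α),(Y,β)) = (1/2)(α(Y) + β(X))` on `V × V*`. -/
noncomputable def bigG (V : Type*) [AddCommGroup V] [Module ℝ V] :
    LinearMap.BilinForm ℝ (V × Module.Dual ℝ V) :=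
  LinearMap.mk₂ ℝ (fun p q => (1 / 2 : ℝ) * (p.2 q.1 + q.2 p.1))
    (fun p p' q => by simp; ring)
    (fun c p q => by simp; ring)
    (fun p q q' => by simp; ring)
    (fun c p q => by simp; ring)

/-- The `g`-orthogonal complement of a subspace of `V × V*`. -/
noncomputable def gOrth {V : Type*} [AddCommGroup V] [Module ℝ V]
    (E : Submodule ℝ (V × Module.Dual ℝ V)) : Submodule ℝ (V × Module.Dual ℝ V) :=
  LinearMap.BilinForm.orthogonal (bigG V) E

section aux

variable {V : Type*} [AddCommGroup V] [Module ℝ V]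

lemma bigG_apply (p q : V × Module.Dual ℝ V) :
    bigG V p q = (1 / 2 : ℝ) * (p.2 q.1 + q.2 p.1) := rfl

lemma bigG_isRefl : (bigG V).IsRefl := by
  intro p q h
  rw [bigG_apply] at h ⊢
  linarith [h]

lemma bigG_nondegenerate [FiniteDimensional ℝ V] : (bigG V).Nondegenerate := by
  refine (LinearMap.IsRefl.nondegenerate_iff_separatingLeft (B := bigG V) (fun p q h => bigG_isRefl p q h)).2 ?_
  intro p hp
  have h1 : p.2 = 0 := by
    ext y
    have := hp (y, 0)
    rw [bigG_apply] at this
    simp at this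
    simpa using this
  have h2 : p.1 = 0 := by
    rw [← Module.forall_dual_apply_eq_zero_iff ℝ p.1]
    intro φ
    have := hp (0, φ)
    rw [bigG_apply] at this
    simp at this
    simpa using this
  exact Prod.ext h2 h1

/-- Rank–nullity for the first projection restricted to a submodule of a product. -/
lemma finrank_eq_map_add_comap {M N : Type*} [AddCommGroup M] [Module ℝ M]
    [AddCommGroup N] [Module ℝ N] [FiniteDimensional ℝ M] [FiniteDimensional ℝ N]
    (F : Submodule ℝ (M × N)) :
    finrank ℝ F = finrank ℝ (F.map (LinearMap.fst ℝ M N))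
      + finrank ℝ (F.comap (LinearMap.inr ℝ M N)) := by
  set f := (LinearMap.fst ℝ M N).domRestrict F with hf
  have hrange : LinearMap.range f = F.map (LinearMap.fst ℝ M N) := by
    simp [hf]
  have hker1 : LinearMap.ker f
      = Submodule.comap F.subtype ((LinearMap.ker (LinearMap.fst ℝ M N)) ⊓ F) := by
    ext x
    simp only [LinearMap.mem_ker, Submodule.mem_comap, Submodule.mem_inf, hf,
      LinearMap.domRestrict_apply, LinearMap.fst_apply, Submodule.coe_mem, and_true,
      Submodule.coe_subtype]
  have hker2 : finrank ℝ (LinearMap.ker f)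
      = finrank ℝ ((LinearMap.ker (LinearMap.fst ℝ M N)) ⊓ F : Submodule ℝ (M × N)) := by
    rw [hker1]
    exact LinearEquiv.finrank_eq (Submodule.comapSubtypeEquivOfLe inf_le_right)
  have hmap : Submodule.map (LinearMap.inr ℝ M N) (F.comap (LinearMap.inr ℝ M N))
      = (LinearMap.ker (LinearMap.fst ℝ M N)) ⊓ F := by
    ext x
    simp only [Submodule.mem_map, Submodule.mem_comap, LinearMap.coe_inr,
      Submodule.mem_inf, LinearMap.mem_ker, LinearMap.fst_apply]
    constructor
    · rintro ⟨α, hα, rfl⟩; exact ⟨rfl, hα⟩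
    · rintro ⟨h1, h2⟩
      refine ⟨x.2, ?_, ?_⟩
      · have : ((0 : M), x.2) = x := Prod.ext h1.symm rfl
        rw [this]; exact h2
      · exact Prod.ext h1.symm rfl
  have hcomap : finrank ℝ (F.comap (LinearMap.inr ℝ M N))
      = finrank ℝ ((LinearMap.ker (LinearMap.fst ℝ M N)) ⊓ F : Submodule ℝ (M × N)) := by
    rw [← hmap]
    exact LinearEquiv.finrank_eq
      (Submodule.equivMapOfInjective _ LinearMap.inr_injective (F.comap (LinearMap.inr ℝ M N)))
  rw [← hrange, hcomap, ← hker2]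
  exact (LinearMap.finrank_range_add_finrank_ker f).symm

/-- `{α : (0,α) ∈ F^⊥} = ann (pr_V F)`. -/
lemma comap_inr_gOrth (F : Submodule ℝ (V × Module.Dual ℝ V)) :
    (gOrth F).comap (LinearMap.inr ℝ V (Module.Dual ℝ V))
      = (F.map (LinearMap.fst ℝ V (Module.Dual ℝ V))).dualAnnihilator := by
  ext α
  simp only [Submodule.mem_comap, LinearMap.coe_inr, gOrth,
    LinearMap.BilinForm.mem_orthogonal_iff, Submodule.mem_dualAnnihilator]
  constructor
  · rintro h x ⟨p, hp, rfl⟩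
    have := h p hp
    rw [bigG_apply] at this
    simp at this
    simpa using this
  · intro h p hp
    rw [bigG_apply]
    have : α p.1 = 0 := h p.1 ⟨p, hp, rfl⟩
    simp [this]

end aux

/-- For an isotropic `E` with `U = pr_V E` and `U′ = pr_V E^⊥`:
`dim E = dim U + (dim V - dim U′)`, `dim E^⊥ = dim U′ + (dim V - dim U)`, and
equivalently with `dim ann U′`, `dim ann U` (annihilators in `V*`). -/
theorem stmt4 (V : Type*) [AddCommGroup V] [Module ℝ V] [FiniteDimensional ℝ V]
    (E : Submodule ℝ (V × Dual ℝ V))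
    (hiso : ∀ p ∈ E, ∀ q ∈ E, bigG V p q = 0)
    (U U' : Submodule ℝ V)
    (hU : U = Submodule.map (LinearMap.fst ℝ V (Dual ℝ V)) E)
    (hU' : U' = Submodule.map (LinearMap.fst ℝ V (Dual ℝ V)) (gOrth E)) :
    finrank ℝ E = finrank ℝ U + (finrank ℝ V - finrank ℝ U') ∧
    finrank ℝ (gOrth E) = finrank ℝ U' + (finrank ℝ V - finrank ℝ U) ∧
    finrank ℝ E = finrank ℝ U + finrank ℝ U'.dualAnnihilator ∧
    finrank ℝ (gOrth E) = finrank ℝ U' + finrank ℝ U.dualAnnihilator := by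
  have hEE : gOrth (gOrth E) = E :=
    LinearMap.BilinForm.orthogonal_orthogonal bigG_nondegenerate bigG_isRefl E
  -- dim E = dim U + dim ann U'
  have h1 : finrank ℝ E = finrank ℝ U + finrank ℝ U'.dualAnnihilator := by
    have := finrank_eq_map_add_comap E
    rw [← hEE, comap_inr_gOrth, hEE] at this
    rw [this, ← hU, ← hU']
  -- dim E^⊥ = dim U' + dim ann U
  have h2 : finrank ℝ (gOrth E) = finrank ℝ U' + finrank ℝ U.dualAnnihilator := by
    have := finrank_eq_map_add_comap (gOrth E)
    rw [comap_inr_gOrth] at this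
    rw [this, ← hU, ← hU']
  -- dim ann W = dim V - dim W
  have hann : ∀ W : Submodule ℝ V,
      finrank ℝ W.dualAnnihilator = finrank ℝ V - finrank ℝ W := by
    intro W
    have h := LinearEquiv.finrank_eq (R := ℝ) (M := V ⧸ W)
      (N := { x // x ∈ W.dualAnnihilator }) (Subspace.quotEquivAnnihilator W)
    have h2 := Submodule.finrank_quotient_add_finrank W
    omega
  exact ⟨by rw [h1, hann U'], by rw [h2, hann U], h1, h2⟩
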